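/- Theorem 2.1(a). Fix t ∈ ℝ. Suppose x ∈ 𝓑_{ε1,ε2}, the separation condition σ(t) ≥ 2α/(φ'_k(t) − φ'_{k−1}(t)) holds for all t and k = 1,…,K, and 2M(t)(τ0 + λ_0(t)) ≤ μ(t). Let ε̃1 satisfy M(t)(τ0 + λ_0(t)) ≤ ε̃1 ≤ μ(t) − M(t)(τ0 + λ_0(t)). Then the set 𝓖_t = {η : |Ṽ_x(t,η)| > ε̃1} is the disjoint union of exactly the K+1 sets 𝓖_{t,k} = {η ∈ 𝓖_t : |η − φ'_k(t)| < α/σ(t)}, 0 ≤ k ≤ K, and each 𝓖_{t,k} is non-empty (in particular φ'_k(t) ∈ 𝓖_{t,k}). -/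

import Mathlib

open MeasureTheory Real intervalIntegral

noncomputable section

/-- The adaptive short-time Fourier transform with time-varying window width `σ`. -/
def aSTFT (x : ℝ → ℂ) (g : ℝ → ℝ) (σ : ℝ → ℝ) (t η : ℝ) : ℂ :=
  ∫ τ : ℝ, x (t + τ) * (((σ t)⁻¹ * g (τ / σ t) : ℝ) : ℂ) *
    Complex.exp (-(2 * (π : ℂ) * η * τ) * Complex.I)

/-- The Fourier transform `ĝ` of the window `g`. -/
def hatg (g : ℝ → ℝ) (ξ : ℝ) : ℂ :=
  ∫ τ : ℝ, (g τ : ℂ) * Complex.exp (-(2 * (π : ℂ) * ξ * τ) * Complex.I)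

/-- The absolute moments `I_n = ∫ |τ^n g(τ)| dτ` of the window. -/
def momentI (g : ℝ → ℝ) (n : ℕ) : ℝ := ∫ τ : ℝ, |τ| ^ n * |g τ|

/-- The `k`-th component `x_k(s) = A_k(s) e^{2πi φ_k(s)}`. -/
def xcomp (A φ : ℕ → ℝ → ℝ) (k : ℕ) (s : ℝ) : ℂ :=
  (A k s : ℂ) * Complex.exp ((2 * (π : ℂ) * φ k s) * Complex.I)

/-- `M(t) = Σ_{k=0}^K A_k(t)`. -/
def Msum (K : ℕ) (A : ℕ → ℝ → ℝ) (t : ℝ) : ℝ := ∑ k ∈ Finset.range (K + 1), A k t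

/-- `μ(t) = min_{0 ≤ k ≤ K} A_k(t)`. -/
def muMin (K : ℕ) (A : ℕ → ℝ → ℝ) (t : ℝ) : ℝ :=
  (Finset.range (K + 1)).inf' (by simp) fun k => A k t

/-- `λ_0(t) = ε1 I_1 σ(t) + π ε2 I_2 σ(t)²`. -/
def lam0 (g : ℝ → ℝ) (σ : ℝ → ℝ) (ε1 ε2 t : ℝ) : ℝ :=
  ε1 * momentI g 1 * σ t + π * ε2 * momentI g 2 * σ t ^ 2

/-- `err_ℓ(t) = M(t)λ_0(t) + Σ_{k≠ℓ} A_k(t) |ĝ(α(2|ℓ−k|−1))|`. -/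
def errl (K : ℕ) (A : ℕ → ℝ → ℝ) (g : ℝ → ℝ) (σ : ℝ → ℝ) (α ε1 ε2 : ℝ)
    (l : ℕ) (t : ℝ) : ℝ :=
  Msum K A t * lam0 g σ ε1 ε2 t +
    ∑ k ∈ (Finset.range (K + 1)).erase l,
      A k t * ‖hatg g (α * (2 * |(l : ℝ) - (k : ℝ)| - 1))‖

/-- `𝓖_t = {η : |Ṽ_x(t,η)| > ε̃1}`. -/
def Gt (x : ℝ → ℂ) (g : ℝ → ℝ) (σ : ℝ → ℝ) (t eps : ℝ) : Set ℝ :=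
  {η | eps < ‖aSTFT x g σ t η‖}

/-- `𝓖_{t,k} = {η ∈ 𝓖_t : |η − φ'_k(t)| < α/σ(t)}`. -/
def Gtk (x : ℝ → ℂ) (g : ℝ → ℝ) (σ : ℝ → ℝ) (φ : ℕ → ℝ → ℝ) (α t eps : ℝ)
    (k : ℕ) : Set ℝ :=
  {η | η ∈ Gt x g σ t eps ∧ |η - deriv (φ k) t| < α / σ t}


lemma cexp_lip (a b : ℝ) :
    ‖Complex.exp ((a:ℂ) * Complex.I) - Complex.exp ((b:ℂ) * Complex.I)‖ ≤ |a - b| := by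
  have hd : ∀ x : ℝ, HasDerivAt (fun θ : ℝ => Complex.exp ((θ:ℂ) * Complex.I))
      (Complex.exp ((x:ℂ) * Complex.I) * Complex.I) x := by
    intro x
    have h1 : HasDerivAt (fun θ : ℝ => ((θ:ℂ))) 1 x := Complex.ofRealCLM.hasDerivAt
    have h2 : HasDerivAt (fun θ : ℝ => ((θ:ℂ) * Complex.I)) Complex.I x := by
      simpa using h1.mul_const Complex.I
    simpa [mul_comm] using h2.cexp
  have key := Convex.norm_image_sub_le_of_norm_deriv_le (𝕜 := ℝ)
    (f := fun θ : ℝ => Complex.exp ((θ:ℂ) * Complex.I)) (C := 1)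
    (fun x _ => (hd x).differentiableAt)
    (fun x _ => by
      rw [(hd x).deriv]
      simp [Complex.norm_exp_ofReal_mul_I]) convex_univ (Set.mem_univ b) (Set.mem_univ a)
  simpa using key


lemma taylor_bound (φf : ℝ → ℝ) (hφ : ContDiff ℝ 2 φf) (ε2 : ℝ)
    (h'' : ∀ s, |deriv (deriv φf) s| ≤ ε2) (t τ : ℝ) :
    |φf (t + τ) - φf t - deriv φf t * τ| ≤ ε2 * τ ^ 2 / 2 := by
  have hd1 : Differentiable ℝ φf := hφ.differentiable (by norm_num)
  have hφ2 : ContDiff ℝ (1 + 1 : ℕ) φf := by exact_mod_cast hφ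
  have hφ' : ContDiff ℝ 1 (deriv φf) :=
    (contDiff_succ_iff_deriv.mp (show ContDiff ℝ (1 + 1) φf by
      norm_num [one_add_one_eq_two]; exact hφ)).2.2
  have hd2 : Differentiable ℝ (deriv φf) := hφ'.differentiable (by norm_num)
  have hc2 : Continuous (deriv φf) := hd2.continuous
  have lip : ∀ s : ℝ, |deriv φf (t + s) - deriv φf t| ≤ ε2 * |s| := by
    intro s
    have key := Convex.norm_image_sub_le_of_norm_deriv_le (𝕜 := ℝ) (f := deriv φf)
      (fun x _ => hd2 x) (fun x _ => h'' x) convex_univ (Set.mem_univ t) (Set.mem_univ (t + s))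
    simpa using key
  set ψ : ℝ → ℝ := fun s => deriv φf (t + s) - deriv φf t with hψ
  have hψc : Continuous ψ := (hc2.comp (continuous_const.add continuous_id)).sub continuous_const
  have hftc : φf (t + τ) - φf t - deriv φf t * τ = ∫ s in (0:ℝ)..τ, ψ s := by
    have hder : ∀ s ∈ Set.uIcc (0:ℝ) τ,
        HasDerivAt (fun u => φf (t + u) - φf t - deriv φf t * u) (ψ s) s := by
      intro s _
      have h1 : HasDerivAt (fun u : ℝ => φf (t + u)) (deriv φf (t + s)) s := by
        have := ((hd1 (t + s)).hasDerivAt).comp s ((hasDerivAt_id s).const_add t)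
        simpa [Function.comp_def] using this
      exact ((h1.sub_const (φf t)).sub ((hasDerivAt_id s).const_mul (deriv φf t))).congr_deriv (by simp [hψ])
    have := integral_eq_sub_of_hasDerivAt hder (hψc.intervalIntegrable 0 τ)
    simp at this
    linarith [this]
  rw [hftc]
  rcases le_or_gt 0 τ with hτ | hτ
  · calc |∫ s in (0:ℝ)..τ, ψ s| ≤ ∫ s in (0:ℝ)..τ, |ψ s| :=
        abs_integral_le_integral_abs hτ
    _ ≤ ∫ s in (0:ℝ)..τ, ε2 * s := by
        apply integral_mono_on hτ (hψc.abs.intervalIntegrable 0 τ)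
          ((continuous_const.mul continuous_id).intervalIntegrable 0 τ)
        intro s hs
        have := lip s
        rwa [abs_of_nonneg hs.1] at this
    _ = ε2 * τ ^ 2 / 2 := by
        rw [intervalIntegral.integral_const_mul, integral_id]
        ring
  · rw [intervalIntegral.integral_symm, abs_neg]
    calc |∫ s in τ..(0:ℝ), ψ s| ≤ ∫ s in τ..(0:ℝ), |ψ s| :=
        abs_integral_le_integral_abs hτ.le
    _ ≤ ∫ s in τ..(0:ℝ), -(ε2 * s) := by
        apply integral_mono_on hτ.le (hψc.abs.intervalIntegrable τ 0)
          (((continuous_const.mul continuous_id).neg).intervalIntegrable τ 0)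
        intro s hs
        simp only [hψ, id_eq, Pi.neg_apply, Pi.mul_apply]
        have := lip s
        rw [abs_of_nonpos hs.2] at this
        linarith
    _ = ε2 * τ ^ 2 / 2 := by
        rw [intervalIntegral.integral_neg, intervalIntegral.integral_const_mul, integral_id]
        ring

lemma hatg_zero (g : ℝ → ℝ) (h : (∫ τ : ℝ, g τ) = 1) : hatg g 0 = 1 := by
  unfold hatg
  have : ∀ τ : ℝ, ((g τ : ℂ)) * Complex.exp (-(2 * (π : ℂ) * (0:ℝ) * τ) * Complex.I)
      = ((g τ : ℂ)) := by
    intro τ; push_cast; simp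
  rw [integral_congr_ae (ae_of_all _ this)]
  exact (integral_ofReal (𝕜 := ℂ)).trans (by rw [h]; norm_num)

lemma hatg_tail {g : ℝ → ℝ} {τ0 α : ℝ} (hα : 0 < α)
    (hgeven : ∀ ξ, ‖hatg g (-ξ)‖ = ‖hatg g ξ‖)
    (hgdec : ∀ ξ1 ξ2, 0 ≤ ξ1 → ξ1 ≤ ξ2 → ‖hatg g ξ2‖ ≤ ‖hatg g ξ1‖)
    (hgα : ‖hatg g α‖ = τ0) {y : ℝ} (hy : α ≤ |y|) : ‖hatg g y‖ ≤ τ0 := by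
  rcases le_or_gt 0 y with h | h
  · rw [abs_of_nonneg h] at hy
    rw [← hgα]; exact hgdec α y hα.le hy
  · rw [abs_of_neg h] at hy
    calc ‖hatg g y‖ = ‖hatg g (-y)‖ := by rw [← hgeven (-y), neg_neg]
    _ ≤ ‖hatg g α‖ := hgdec α (-y) hα.le hy
    _ = τ0 := hgα

lemma component_approx (Af φf g : ℝ → ℝ) (ε1 ε2 σt t η : ℝ)
    (hσt : 0 < σt)
    (hA : Continuous Af) (hφc : Continuous φf) (hApos : 0 < Af t)
    (hφ : ContDiff ℝ 2 φf)
    (hAlip : ∀ s τ, |Af (s + τ) - Af s| ≤ ε1 * |τ| * Af s)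
    (hφ'' : ∀ s, |deriv (deriv φf) s| ≤ ε2)
    (hgint : Integrable g)
    (hgI1 : Integrable fun τ : ℝ => τ * g τ)
    (hgI2 : Integrable fun τ : ℝ => τ ^ 2 * g τ) :
    Integrable (fun τ : ℝ => ((Af (t + τ) : ℂ) * Complex.exp ((2 * (π : ℂ) * (φf (t + τ))) * Complex.I)) *
        ((σt⁻¹ * g (τ / σt) : ℝ) : ℂ) * Complex.exp (-(2 * (π : ℂ) * η * τ) * Complex.I)) ∧
    ‖(∫ τ : ℝ, ((Af (t + τ) : ℂ) * Complex.exp ((2 * (π : ℂ) * (φf (t + τ))) * Complex.I) *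
        ((σt⁻¹ * g (τ / σt) : ℝ) : ℂ) * Complex.exp (-(2 * (π : ℂ) * η * τ) * Complex.I)))
      - (Af t : ℂ) * Complex.exp ((2 * (π : ℂ) * (φf t)) * Complex.I) * hatg g (σt * (η - deriv φf t))‖
      ≤ Af t * (ε1 * momentI g 1 * σt + π * ε2 * momentI g 2 * σt ^ 2) := by
  set ξ : ℝ := η - deriv φf t with hξ
  set c : ℝ → ℂ := fun τ => ((σt⁻¹ * g (τ / σt) : ℝ) : ℂ) with hc
  set e : ℝ → ℂ := fun τ => Complex.exp (-(2 * (π : ℂ) * η * τ) * Complex.I) with he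
  set f : ℝ → ℂ := fun τ => ((Af (t + τ) : ℂ) * Complex.exp ((2 * (π : ℂ) * (φf (t + τ))) * Complex.I)) * c τ * e τ with hf
  set m : ℝ → ℂ := fun τ => ((Af t : ℂ) * Complex.exp ((2 * (π : ℂ) * (φf t) + 2 * (π : ℂ) * (deriv φf t) * τ) * Complex.I)) * c τ * e τ with hm
  have hσt' : (σt : ℂ) ≠ 0 := Complex.ofReal_ne_zero.mpr hσt.ne'
  -- norms of c and e
  have hcn : ∀ τ, ‖c τ‖ = σt⁻¹ * |g (τ / σt)| := by
    intro τ
    rw [hc]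
    rw [Complex.norm_real, Real.norm_eq_abs, abs_mul, abs_inv, abs_of_pos hσt]
  have hen : ∀ τ, ‖e τ‖ = 1 := by
    intro τ
    have : e τ = Complex.exp (((-(2 * π * η * τ) : ℝ) : ℂ) * Complex.I) := by
      rw [he]; push_cast; ring_nf
    rw [this, Complex.norm_exp_ofReal_mul_I]
  -- pointwise bound on the difference
  have hdiff : ∀ τ : ℝ, ‖f τ - m τ‖ ≤ (Af t * (ε1 * |τ| + π * ε2 * τ ^ 2)) * (σt⁻¹ * |g (τ / σt)|) := by
    intro τ
    have hfm : f τ - m τ =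
        (((Af (t + τ) : ℂ) * Complex.exp ((2 * (π : ℂ) * (φf (t + τ))) * Complex.I))
          - ((Af t : ℂ) * Complex.exp ((2 * (π : ℂ) * (φf t) + 2 * (π : ℂ) * (deriv φf t) * τ) * Complex.I)))
          * (c τ * e τ) := by
      rw [hf, hm]; ring
    have hea : ((2 * (π : ℂ) * (φf (t + τ))) * Complex.I) = (((2 * π * φf (t + τ) : ℝ) : ℂ) * Complex.I) := by
      push_cast; ring
    have heb : ((2 * (π : ℂ) * (φf t) + 2 * (π : ℂ) * (deriv φf t) * τ) * Complex.I)
        = (((2 * π * (φf t + deriv φf t * τ) : ℝ) : ℂ) * Complex.I) := by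
      push_cast; ring
    rw [hfm, norm_mul, norm_mul, hcn, hen, mul_one, hea, heb]
    set a : ℝ := 2 * π * φf (t + τ)
    set b : ℝ := 2 * π * (φf t + deriv φf t * τ)
    have hsplit : ((Af (t + τ) : ℂ) * Complex.exp ((a : ℂ) * Complex.I))
        - ((Af t : ℂ) * Complex.exp ((b : ℂ) * Complex.I))
        = ((Af (t + τ) : ℂ) - (Af t : ℂ)) * Complex.exp ((a : ℂ) * Complex.I)
          + (Af t : ℂ) * (Complex.exp ((a : ℂ) * Complex.I) - Complex.exp ((b : ℂ) * Complex.I)) := by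
      ring
    have hb1 : ‖((Af (t + τ) : ℂ) - (Af t : ℂ))‖ = |Af (t + τ) - Af t| := by
      rw [← Complex.ofReal_sub, Complex.norm_real, Real.norm_eq_abs]
    have htay := taylor_bound φf hφ ε2 hφ'' t τ
    have hab : |a - b| ≤ π * ε2 * τ ^ 2 := by
      have : a - b = 2 * π * (φf (t + τ) - φf t - deriv φf t * τ) := by
        simp only [a, b]; ring
      rw [this, abs_mul, abs_of_pos (by positivity : (0:ℝ) < 2 * π)]
      calc 2 * π * |φf (t + τ) - φf t - deriv φf t * τ| ≤ 2 * π * (ε2 * τ ^ 2 / 2) := by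
            apply mul_le_mul_of_nonneg_left htay (by positivity)
      _ = π * ε2 * τ ^ 2 := by ring
    have hnorm1 : ‖((Af (t + τ) : ℂ) * Complex.exp ((a : ℂ) * Complex.I))
        - ((Af t : ℂ) * Complex.exp ((b : ℂ) * Complex.I))‖ ≤ Af t * (ε1 * |τ| + π * ε2 * τ ^ 2) := by
      rw [hsplit]
      calc ‖((Af (t + τ) : ℂ) - (Af t : ℂ)) * Complex.exp ((a : ℂ) * Complex.I)
          + (Af t : ℂ) * (Complex.exp ((a : ℂ) * Complex.I) - Complex.exp ((b : ℂ) * Complex.I))‖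
          ≤ ‖((Af (t + τ) : ℂ) - (Af t : ℂ)) * Complex.exp ((a : ℂ) * Complex.I)‖
            + ‖(Af t : ℂ) * (Complex.exp ((a : ℂ) * Complex.I) - Complex.exp ((b : ℂ) * Complex.I))‖ :=
            norm_add_le _ _
      _ ≤ |Af (t + τ) - Af t| * 1 + Af t * |a - b| := by
            rw [norm_mul, norm_mul, hb1, Complex.norm_exp_ofReal_mul_I,
              Complex.norm_real, Real.norm_eq_abs, abs_of_pos hApos]
            exact add_le_add le_rfl (mul_le_mul_of_nonneg_left (cexp_lip a b) hApos.le)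
      _ ≤ (ε1 * |τ| * Af t) * 1 + Af t * (π * ε2 * τ ^ 2) := by
            have hA0 : 0 ≤ Af t := hApos.le
            gcongr
            all_goals first | exact hAlip t τ | exact hab | positivity
      _ = Af t * (ε1 * |τ| + π * ε2 * τ ^ 2) := by ring
    exact mul_le_mul_of_nonneg_right hnorm1 (by positivity)
  -- integrability of auxiliary real functions
  have hgc : Integrable fun τ : ℝ => g (τ / σt) := hgint.comp_div hσt.ne'
  have habs1 : Integrable fun τ : ℝ => |τ| * |g (τ / σt)| := by
    have h2 := (hgI1.abs.comp_div (R := σt) hσt.ne').const_mul σt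
    have heq : (fun τ : ℝ => σt * |τ / σt * g (τ / σt)|) = fun τ : ℝ => |τ| * |g (τ / σt)| := by
      funext τ
      rw [abs_mul, abs_div, abs_of_pos hσt]
      field_simp
    rwa [heq] at h2
  have habs2 : Integrable fun τ : ℝ => τ ^ 2 * |g (τ / σt)| := by
    have h2 := (hgI2.abs.comp_div (R := σt) hσt.ne').const_mul (σt ^ 2)
    have heq : (fun τ : ℝ => σt ^ 2 * |(τ / σt) ^ 2 * g (τ / σt)|) = fun τ : ℝ => τ ^ 2 * |g (τ / σt)| := by
      funext τ
      rw [abs_mul, abs_pow, abs_div, abs_of_pos hσt, div_pow, sq_abs]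
      field_simp
    rwa [heq] at h2
  have hdom : Integrable (fun τ : ℝ => Af t * (ε1 * |τ| + π * ε2 * τ ^ 2) * (σt⁻¹ * |g (τ / σt)|)) := by
    have heq : (fun τ : ℝ => Af t * (ε1 * |τ| + π * ε2 * τ ^ 2) * (σt⁻¹ * |g (τ / σt)|))
        = fun τ : ℝ => (Af t * ε1 * σt⁻¹) * (|τ| * |g (τ / σt)|)
          + (Af t * (π * ε2) * σt⁻¹) * (τ ^ 2 * |g (τ / σt)|) := by
      funext τ; ring
    rw [heq]
    exact (habs1.const_mul _).add (habs2.const_mul _)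
  -- measurability
  have hcm : AEStronglyMeasurable c volume := by
    rw [hc]
    exact Complex.continuous_ofReal.comp_aestronglyMeasurable
      (hgc.aestronglyMeasurable.const_mul σt⁻¹)
  have hPcont : Continuous fun τ : ℝ => ((Af (t + τ) : ℂ) * Complex.exp ((2 * (π : ℂ) * (φf (t + τ))) * Complex.I)) := by
    fun_prop
  have hQcont : Continuous fun τ : ℝ => ((Af t : ℂ) * Complex.exp ((2 * (π : ℂ) * (φf t) + 2 * (π : ℂ) * (deriv φf t) * τ) * Complex.I)) := by
    fun_prop
  have hecont : Continuous e := by rw [he]; fun_prop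
  have hfmeas : AEStronglyMeasurable f volume := by
    rw [hf]
    exact (hPcont.aestronglyMeasurable.mul hcm).mul hecont.aestronglyMeasurable
  have hmmeas : AEStronglyMeasurable m volume := by
    rw [hm]
    exact (hQcont.aestronglyMeasurable.mul hcm).mul hecont.aestronglyMeasurable
  -- integrability of m and f
  have hmdom : Integrable (fun τ : ℝ => Af t * (σt⁻¹ * |g (τ / σt)|)) :=
    (hgc.abs.const_mul σt⁻¹).const_mul (Af t)
  have hmn : ∀ τ, ‖m τ‖ ≤ Af t * (σt⁻¹ * |g (τ / σt)|) := by
    intro τ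
    rw [hm]
    have heb : ((2 * (π : ℂ) * (φf t) + 2 * (π : ℂ) * (deriv φf t) * τ) * Complex.I)
        = (((2 * π * (φf t + deriv φf t * τ) : ℝ) : ℂ) * Complex.I) := by
      push_cast; ring
    simp only [norm_mul, heb, Complex.norm_exp_ofReal_mul_I, hcn, hen]
    rw [Complex.norm_real, Real.norm_eq_abs, abs_of_pos hApos]
    simp
  have hmint : Integrable m := hmdom.mono' hmmeas (ae_of_all _ hmn)
  have hfmint : Integrable (fun τ => f τ - m τ) :=
    hdom.mono' (hfmeas.sub hmmeas) (ae_of_all _ hdiff)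
  have hfint : Integrable f := by
    have h := hfmint.add hmint
    exact h.congr (ae_of_all _ fun τ => by simp)
  refine ⟨by simpa [hf, hc, he] using hfint, ?_⟩
  -- value of ∫ m
  have hm_val : (∫ τ : ℝ, m τ)
      = (Af t : ℂ) * Complex.exp ((2 * (π : ℂ) * (φf t)) * Complex.I) * hatg g (σt * ξ) := by
    have h1 : ∀ τ : ℝ, m τ = ((Af t : ℂ) * Complex.exp ((2 * (π : ℂ) * (φf t)) * Complex.I))
        * (c τ * Complex.exp (-(2 * (π : ℂ) * ξ * τ) * Complex.I)) := by
      intro τ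
      rw [hm, he]
      have hexp : ((2 * (π : ℂ) * (φf t) + 2 * (π : ℂ) * (deriv φf t) * τ) * Complex.I)
            + (-(2 * (π : ℂ) * η * τ) * Complex.I)
          = ((2 * (π : ℂ) * (φf t)) * Complex.I) + (-(2 * (π : ℂ) * ξ * τ) * Complex.I) := by
        rw [hξ]; push_cast; ring
      calc ((Af t : ℂ) * Complex.exp ((2 * (π : ℂ) * (φf t) + 2 * (π : ℂ) * (deriv φf t) * τ) * Complex.I)) * c τ
            * Complex.exp (-(2 * (π : ℂ) * η * τ) * Complex.I)
          = (Af t : ℂ) * c τ * Complex.exp (((2 * (π : ℂ) * (φf t) + 2 * (π : ℂ) * (deriv φf t) * τ) * Complex.I)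
              + (-(2 * (π : ℂ) * η * τ) * Complex.I)) := by
            rw [Complex.exp_add]; ring
      _ = (Af t : ℂ) * c τ * Complex.exp (((2 * (π : ℂ) * (φf t)) * Complex.I) + (-(2 * (π : ℂ) * ξ * τ) * Complex.I)) := by
            rw [hexp]
      _ = ((Af t : ℂ) * Complex.exp ((2 * (π : ℂ) * (φf t)) * Complex.I))
            * (c τ * Complex.exp (-(2 * (π : ℂ) * ξ * τ) * Complex.I)) := by
            rw [Complex.exp_add]; ring
    rw [integral_congr_ae (ae_of_all _ h1), MeasureTheory.integral_const_mul]
    congr 1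
    -- ∫ c τ * exp(-2πiξτ) = ĝ(σt ξ)
    have h2 : ∀ τ : ℝ, c τ * Complex.exp (-(2 * (π : ℂ) * ξ * τ) * Complex.I)
        = (σt⁻¹ : ℂ) * (((g (τ / σt) : ℂ)) * Complex.exp (-(2 * (π : ℂ) * (σt * ξ) * ((τ / σt : ℝ) : ℂ)) * Complex.I)) := by
      intro τ
      rw [hc]
      have hexp : (-(2 * (π : ℂ) * ξ * τ) * Complex.I)
          = (-(2 * (π : ℂ) * (σt * ξ) * ((τ / σt : ℝ) : ℂ)) * Complex.I) := by
        push_cast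
        field_simp
      rw [hexp]
      push_cast
      ring
    rw [integral_congr_ae (ae_of_all _ h2), MeasureTheory.integral_const_mul]
    have h3 := MeasureTheory.Measure.integral_comp_div
      (fun u : ℝ => ((g u : ℂ)) * Complex.exp (-(2 * (π : ℂ) * ((σt : ℂ) * (ξ : ℂ)) * u) * Complex.I)) σt
    have h4 : hatg g (σt * ξ) = ∫ y : ℝ, ((g y : ℂ)) * Complex.exp (-(2 * (π : ℂ) * ((σt : ℂ) * (ξ : ℂ)) * y) * Complex.I) := by
      unfold hatg
      push_cast
      rfl
    rw [h3, abs_of_pos hσt, Complex.real_smul, inv_mul_cancel_left₀ hσt', h4]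
  -- main estimate
  have hsub : (∫ τ : ℝ, (f τ - m τ)) = (∫ τ : ℝ, f τ) - ∫ τ : ℝ, m τ := integral_sub hfint hmint
  have hdomval : (∫ τ : ℝ, Af t * (ε1 * |τ| + π * ε2 * τ ^ 2) * (σt⁻¹ * |g (τ / σt)|))
      = Af t * (ε1 * momentI g 1 * σt + π * ε2 * momentI g 2 * σt ^ 2) := by
    have hint1 : (∫ τ : ℝ, |τ| * |g (τ / σt)|) = σt ^ 2 * momentI g 1 := by
      have h := MeasureTheory.Measure.integral_comp_div (fun u : ℝ => |u * g u|) σt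
      have heq : (fun x : ℝ => |x| * |g (x / σt)|) = fun x : ℝ => σt * |x / σt * g (x / σt)| := by
        funext x
        rw [abs_mul, abs_div, abs_of_pos hσt]
        field_simp
      rw [heq, MeasureTheory.integral_const_mul, h, smul_eq_mul, abs_of_pos hσt]
      have hmom : momentI g 1 = ∫ u : ℝ, |u * g u| := by
        unfold momentI
        congr 1
        funext u
        rw [pow_one, abs_mul]
      rw [hmom]
      ring
    have hint2 : (∫ τ : ℝ, τ ^ 2 * |g (τ / σt)|) = σt ^ 3 * momentI g 2 := by
      have h := MeasureTheory.Measure.integral_comp_div (fun u : ℝ => |u ^ 2 * g u|) σt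
      have heq : (fun x : ℝ => x ^ 2 * |g (x / σt)|) = fun x : ℝ => σt ^ 2 * |(x / σt) ^ 2 * g (x / σt)| := by
        funext x
        rw [abs_mul, abs_pow, abs_div, abs_of_pos hσt, div_pow, sq_abs]
        field_simp
      rw [heq, MeasureTheory.integral_const_mul, h, smul_eq_mul, abs_of_pos hσt]
      have hmom : momentI g 2 = ∫ u : ℝ, |u ^ 2 * g u| := by
        unfold momentI
        congr 1
        funext u
        rw [abs_mul, abs_pow]
      rw [hmom]
      ring
    have heq : (fun τ : ℝ => Af t * (ε1 * |τ| + π * ε2 * τ ^ 2) * (σt⁻¹ * |g (τ / σt)|))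
        = fun τ : ℝ => (Af t * ε1 * σt⁻¹) * (|τ| * |g (τ / σt)|)
          + (Af t * (π * ε2) * σt⁻¹) * (τ ^ 2 * |g (τ / σt)|) := by
      funext τ; ring
    rw [heq, integral_add (habs1.const_mul _) (habs2.const_mul _),
      MeasureTheory.integral_const_mul, MeasureTheory.integral_const_mul, hint1, hint2]
    field_simp
  calc ‖(∫ τ : ℝ, f τ) - (Af t : ℂ) * Complex.exp ((2 * (π : ℂ) * (φf t)) * Complex.I) * hatg g (σt * ξ)‖
      = ‖∫ τ : ℝ, (f τ - m τ)‖ := by rw [hsub, hm_val]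
  _ ≤ ∫ τ : ℝ, ‖f τ - m τ‖ := norm_integral_le_integral_norm _
  _ ≤ ∫ τ : ℝ, Af t * (ε1 * |τ| + π * ε2 * τ ^ 2) * (σt⁻¹ * |g (τ / σt)|) :=
      integral_mono hfmint.norm hdom hdiff
  _ = Af t * (ε1 * momentI g 1 * σt + π * ε2 * momentI g 2 * σt ^ 2) := hdomval


 theorem thm2_1a (K : ℕ) (A φ : ℕ → ℝ → ℝ) (ε1 ε2 : ℝ) (x : ℝ → ℂ)
    (g : ℝ → ℝ) (σ : ℝ → ℝ) (τ0 α t epst : ℝ)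
    (hε1 : 0 < ε1) (hε2 : 0 < ε2)
    (hAreg : ∀ k ≤ K, ContDiff ℝ 1 (A k))
    (hAbdd : ∀ k ≤ K, ∃ C, ∀ s, |A k s| ≤ C)
    (hφreg : ∀ k ≤ K, ContDiff ℝ 2 (φ k))
    (hφ0 : ∀ s, φ 0 s = 0)
    (hApos : ∀ k ≤ K, ∀ s, 0 < A k s)
    (hφ'pos : ∀ k, 1 ≤ k → k ≤ K → ∃ c > 0, ∀ s, c ≤ deriv (φ k) s)
    (hφ'bdd : ∀ k, 1 ≤ k → k ≤ K → ∃ C, ∀ s, deriv (φ k) s ≤ C)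
    (hfreq : ∃ d > 0, ∀ k, 2 ≤ k → k ≤ K → ∀ s, d ≤ deriv (φ k) s - deriv (φ (k - 1)) s)
    (hAlip : ∀ k ≤ K, ∀ s τ, |A k (s + τ) - A k s| ≤ ε1 * |τ| * A k s)
    (hφ'' : ∀ k, 1 ≤ k → k ≤ K → ∀ s, |deriv (deriv (φ k)) s| ≤ ε2)
    (hx : ∀ s, x s = ∑ k ∈ Finset.range (K + 1), xcomp A φ k s)
    (hgint : Integrable g)
    (hgL2 : MemLp g 2 (volume : Measure ℝ))
    (hgI1 : Integrable fun τ : ℝ => τ * g τ)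
    (hgI2 : Integrable fun τ : ℝ => τ ^ 2 * g τ)
    (hgnorm : (∫ τ : ℝ, g τ) = 1)
    (hgeven : ∀ ξ, ‖hatg g (-ξ)‖ = ‖hatg g ξ‖)
    (hgdec : ∀ ξ1 ξ2, 0 ≤ ξ1 → ξ1 ≤ ξ2 → ‖hatg g ξ2‖ ≤ ‖hatg g ξ1‖)
    (hτ0 : 0 < τ0) (hτ0' : τ0 < 1)
    (hα : 0 < α) (hgα : ‖hatg g α‖ = τ0)
    (hσ : ∀ s, 0 < σ s)
    (hsep : ∀ s, ∀ k, 1 ≤ k → k ≤ K →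
      2 * α / (deriv (φ k) s - deriv (φ (k - 1)) s) ≤ σ s)
    (hmain : 2 * Msum K A t * (τ0 + lam0 g σ ε1 ε2 t) ≤ muMin K A t)
    (heps1 : Msum K A t * (τ0 + lam0 g σ ε1 ε2 t) ≤ epst)
    (heps2 : epst ≤ muMin K A t - Msum K A t * (τ0 + lam0 g σ ε1 ε2 t))
    :
    (Gt x g σ t epst = ⋃ k ∈ Finset.range (K + 1), Gtk x g σ φ α t epst k) ∧
    (∀ k ≤ K, ∀ l ≤ K, k ≠ l →
      Disjoint (Gtk x g σ φ α t epst k) (Gtk x g σ φ α t epst l)) ∧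
    (∀ k ≤ K, deriv (φ k) t ∈ Gtk x g σ φ α t epst k) := by
  have hσt : 0 < σ t := hσ t
  have hφ0' : φ 0 = fun _ => (0:ℝ) := funext hφ0
  have hdφ0 : deriv (φ 0) t = 0 := by rw [hφ0']; simp
  -- component approximation
  have hcomp : ∀ η : ℝ, ∀ k ∈ Finset.range (K+1),
      Integrable (fun τ : ℝ => xcomp A φ k (t + τ) * (((σ t)⁻¹ * g (τ / σ t) : ℝ) : ℂ)
        * Complex.exp (-(2 * (π : ℂ) * η * τ) * Complex.I)) ∧
      ‖(∫ τ : ℝ, xcomp A φ k (t + τ) * (((σ t)⁻¹ * g (τ / σ t) : ℝ) : ℂ)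
        * Complex.exp (-(2 * (π : ℂ) * η * τ) * Complex.I))
        - (A k t : ℂ) * Complex.exp ((2 * (π : ℂ) * φ k t) * Complex.I)
          * hatg g (σ t * (η - deriv (φ k) t))‖
        ≤ A k t * lam0 g σ ε1 ε2 t := by
    intro η k hk
    rw [Finset.mem_range, Nat.lt_succ_iff] at hk
    have hφ''k : ∀ s, |deriv (deriv (φ k)) s| ≤ ε2 := by
      rcases Nat.eq_zero_or_pos k with rfl | hk1
      · intro s
        rw [hφ0']
        simp [hε2.le]
      · exact hφ'' k hk1 hk
    have key := component_approx (A k) (φ k) g ε1 ε2 (σ t) t η hσt (hAreg k hk).continuous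
      ((hφreg k hk).continuous) (hApos k hk t) (hφreg k hk) (hAlip k hk) hφ''k hgint hgI1 hgI2
    simpa only [xcomp, lam0] using key
  set S : ℝ → ℂ := fun η => ∑ k ∈ Finset.range (K+1),
    (A k t : ℂ) * Complex.exp ((2 * (π:ℂ) * φ k t) * Complex.I)
      * hatg g (σ t * (η - deriv (φ k) t)) with hS
  have hV : ∀ η : ℝ, aSTFT x g σ t η = ∑ k ∈ Finset.range (K+1),
      ∫ τ : ℝ, xcomp A φ k (t + τ) * (((σ t)⁻¹ * g (τ / σ t) : ℝ) : ℂ)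
        * Complex.exp (-(2 * (π : ℂ) * η * τ) * Complex.I) := by
    intro η
    unfold aSTFT
    rw [← integral_finset_sum _ (fun k hk => (hcomp η k hk).1)]
    apply MeasureTheory.integral_congr_ae (ae_of_all _ ?_)
    intro τ
    rw [hx (t + τ), Finset.sum_mul, Finset.sum_mul]
  have hVS : ∀ η : ℝ, ‖aSTFT x g σ t η - S η‖ ≤ Msum K A t * lam0 g σ ε1 ε2 t := by
    intro η
    rw [hV η, hS, ← Finset.sum_sub_distrib]
    calc ‖∑ k ∈ Finset.range (K+1), ((∫ τ : ℝ, xcomp A φ k (t + τ) * (((σ t)⁻¹ * g (τ / σ t) : ℝ) : ℂ)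
            * Complex.exp (-(2 * (π : ℂ) * η * τ) * Complex.I))
          - (A k t : ℂ) * Complex.exp ((2 * (π:ℂ) * φ k t) * Complex.I)
            * hatg g (σ t * (η - deriv (φ k) t)))‖
        ≤ ∑ k ∈ Finset.range (K+1), ‖(∫ τ : ℝ, xcomp A φ k (t + τ) * (((σ t)⁻¹ * g (τ / σ t) : ℝ) : ℂ)
            * Complex.exp (-(2 * (π : ℂ) * η * τ) * Complex.I))
          - (A k t : ℂ) * Complex.exp ((2 * (π:ℂ) * φ k t) * Complex.I)
            * hatg g (σ t * (η - deriv (φ k) t))‖ := norm_sum_le _ _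
    _ ≤ ∑ k ∈ Finset.range (K+1), A k t * lam0 g σ ε1 ε2 t :=
        Finset.sum_le_sum fun k hk => (hcomp η k hk).2
    _ = Msum K A t * lam0 g σ ε1 ε2 t := by rw [Msum, Finset.sum_mul]
  -- norms of the S-terms
  have hterm : ∀ k (z : ℂ), k ≤ K →
      ‖(A k t : ℂ) * Complex.exp ((2 * (π:ℂ) * φ k t) * Complex.I) * z‖ = A k t * ‖z‖ := by
    intro k z hk
    have he : ((2 * (π:ℂ) * φ k t) * Complex.I) = (((2 * π * φ k t : ℝ) : ℂ) * Complex.I) := by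
      push_cast; ring
    rw [norm_mul, norm_mul, he, Complex.norm_exp_ofReal_mul_I, Complex.norm_real,
      Real.norm_eq_abs, abs_of_pos (hApos k hk t), mul_one]
  -- separation
  have hstep : ∀ k, 1 ≤ k → k ≤ K → 2 * α / σ t ≤ deriv (φ k) t - deriv (φ (k-1)) t := by
    intro k h1 hK
    have hD : 0 < deriv (φ k) t - deriv (φ (k-1)) t := by
      rcases eq_or_lt_of_le h1 with h | h
      · obtain ⟨c, hc, hcle⟩ := hφ'pos 1 le_rfl (h ▸ hK)
        have : k = 1 := h.symm
        subst this
        simp only [Nat.sub_self, hdφ0, sub_zero]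
        exact lt_of_lt_of_le hc (hcle t)
      · obtain ⟨d, hd, hfr⟩ := hfreq
        have := hfr k h hK t
        linarith
    have h2 := hsep t k h1 hK
    rw [div_le_iff₀ hD] at h2
    rw [div_le_iff₀ hσt]
    nlinarith
  have h2ασ : 0 < 2 * α / σ t := by positivity
  have hchain : ∀ k l, k < l → l ≤ K → deriv (φ k) t + 2 * α / σ t ≤ deriv (φ l) t := by
    intro k l
    induction l with
    | zero => intro h _; omega
    | succ n ih =>
      intro hkl hlK
      have h1 := hstep (n+1) (by omega) hlK
      have h1' : 2 * α / σ t ≤ deriv (φ (n+1)) t - deriv (φ n) t := by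
        simpa using h1
      rcases Nat.lt_succ_iff_lt_or_eq.mp hkl with h | h
      · have h2 := ih h (by omega)
        linarith
      · subst h
        linarith
  have hsep2 : ∀ k l, k ≤ K → l ≤ K → k ≠ l → 2 * α / σ t ≤ |deriv (φ k) t - deriv (φ l) t| := by
    intro k l hkK hlK hne
    rcases lt_or_gt_of_ne hne with h | h
    · have := hchain k l h hlK
      rw [abs_sub_comm, abs_of_nonneg (by linarith)]
      linarith
    · have := hchain l k h hkK
      rw [abs_of_nonneg (by linarith)]
      linarith
  have habs : ∀ y : ℝ, α / σ t ≤ |y| → α ≤ |σ t * y| := by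
    intro y hy
    rw [abs_mul, abs_of_pos hσt]
    rw [div_le_iff₀ hσt] at hy
    nlinarith
  have hg1 : ‖hatg g (0 : ℝ)‖ = 1 := by rw [hatg_zero g hgnorm]; norm_num
  -- tail bound for S
  have hS_tail : ∀ η, (∀ k, k ≤ K → α / σ t ≤ |η - deriv (φ k) t|) →
      ‖S η‖ ≤ Msum K A t * τ0 := by
    intro η hfar
    calc ‖S η‖ ≤ ∑ k ∈ Finset.range (K+1),
        ‖(A k t : ℂ) * Complex.exp ((2 * (π:ℂ) * φ k t) * Complex.I)
          * hatg g (σ t * (η - deriv (φ k) t))‖ := norm_sum_le _ _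
    _ ≤ ∑ k ∈ Finset.range (K+1), A k t * τ0 := by
        apply Finset.sum_le_sum
        intro k hk
        rw [Finset.mem_range, Nat.lt_succ_iff] at hk
        rw [hterm k _ hk]
        exact mul_le_mul_of_nonneg_left
          (hatg_tail hα hgeven hgdec hgα (habs _ (hfar k hk))) (hApos k hk t).le
    _ = Msum K A t * τ0 := by rw [Msum, Finset.sum_mul]
  have hμpos : 0 < muMin K A t := by
    rw [muMin, Finset.lt_inf'_iff]
    intro k hk
    rw [Finset.mem_range, Nat.lt_succ_iff] at hk
    exact hApos k hk t
  -- Part 3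
  have part3 : ∀ k ≤ K, deriv (φ k) t ∈ Gtk x g σ φ α t epst k := by
    intro k hk
    set η := deriv (φ k) t with hη
    have hmem : k ∈ Finset.range (K+1) := Finset.mem_range.mpr (Nat.lt_succ_iff.mpr hk)
    have hTk : ‖(A k t : ℂ) * Complex.exp ((2 * (π:ℂ) * φ k t) * Complex.I)
        * hatg g (σ t * (η - deriv (φ k) t))‖ = A k t := by
      rw [hterm k _ hk]
      rw [show σ t * (η - deriv (φ k) t) = (0:ℝ) by rw [hη]; ring, hg1, mul_one]
    have hsplit : S η = (A k t : ℂ) * Complex.exp ((2 * (π:ℂ) * φ k t) * Complex.I)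
        * hatg g (σ t * (η - deriv (φ k) t))
        + ∑ l ∈ (Finset.range (K+1)).erase k,
          (A l t : ℂ) * Complex.exp ((2 * (π:ℂ) * φ l t) * Complex.I)
            * hatg g (σ t * (η - deriv (φ l) t)) := by
      rw [hS]
      exact (Finset.add_sum_erase _ _ hmem).symm
    have htail : ‖∑ l ∈ (Finset.range (K+1)).erase k,
        (A l t : ℂ) * Complex.exp ((2 * (π:ℂ) * φ l t) * Complex.I)
          * hatg g (σ t * (η - deriv (φ l) t))‖ ≤ (Msum K A t - A k t) * τ0 := by
      calc ‖∑ l ∈ (Finset.range (K+1)).erase k,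
          (A l t : ℂ) * Complex.exp ((2 * (π:ℂ) * φ l t) * Complex.I)
            * hatg g (σ t * (η - deriv (φ l) t))‖
          ≤ ∑ l ∈ (Finset.range (K+1)).erase k,
            ‖(A l t : ℂ) * Complex.exp ((2 * (π:ℂ) * φ l t) * Complex.I)
              * hatg g (σ t * (η - deriv (φ l) t))‖ := norm_sum_le _ _
      _ ≤ ∑ l ∈ (Finset.range (K+1)).erase k, A l t * τ0 := by
          apply Finset.sum_le_sum
          intro l hl
          have hlk : l ≠ k := Finset.ne_of_mem_erase hl
          have hlK : l ≤ K := by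
            have := Finset.mem_of_mem_erase hl
            rw [Finset.mem_range, Nat.lt_succ_iff] at this
            exact this
          rw [hterm l _ hlK]
          apply mul_le_mul_of_nonneg_left _ (hApos l hlK t).le
          apply hatg_tail hα hgeven hgdec hgα
          apply habs
          have h2 := hsep2 k l hk hlK hlk.symm
          have : η - deriv (φ l) t = deriv (φ k) t - deriv (φ l) t := by rw [hη]
          rw [this]
          calc α / σ t ≤ 2 * α / σ t := by
                rw [div_le_div_iff₀ hσt hσt]; nlinarith
          _ ≤ |deriv (φ k) t - deriv (φ l) t| := h2
      _ = (Msum K A t - A k t) * τ0 := by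
          rw [← Finset.sum_mul]
          congr 1
          rw [Msum, ← Finset.sum_erase_add _ _ hmem]
          ring
    have hSlow : A k t - (Msum K A t - A k t) * τ0 ≤ ‖S η‖ := by
      have h1 : ‖(A k t : ℂ) * Complex.exp ((2 * (π:ℂ) * φ k t) * Complex.I)
          * hatg g (σ t * (η - deriv (φ k) t))‖
          ≤ ‖S η‖ + ‖∑ l ∈ (Finset.range (K+1)).erase k,
            (A l t : ℂ) * Complex.exp ((2 * (π:ℂ) * φ l t) * Complex.I)
              * hatg g (σ t * (η - deriv (φ l) t))‖ := by
        rw [hsplit]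
        calc ‖(A k t : ℂ) * Complex.exp ((2 * (π:ℂ) * φ k t) * Complex.I)
            * hatg g (σ t * (η - deriv (φ k) t))‖
            = ‖((A k t : ℂ) * Complex.exp ((2 * (π:ℂ) * φ k t) * Complex.I)
              * hatg g (σ t * (η - deriv (φ k) t))
              + ∑ l ∈ (Finset.range (K+1)).erase k,
                (A l t : ℂ) * Complex.exp ((2 * (π:ℂ) * φ l t) * Complex.I)
                  * hatg g (σ t * (η - deriv (φ l) t)))
              - ∑ l ∈ (Finset.range (K+1)).erase k,
                (A l t : ℂ) * Complex.exp ((2 * (π:ℂ) * φ l t) * Complex.I)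
                  * hatg g (σ t * (η - deriv (φ l) t))‖ := by rw [add_sub_cancel_right]
        _ ≤ _ := norm_sub_le _ _
      rw [hTk] at h1
      linarith
    have hVlow : ‖S η‖ - Msum K A t * lam0 g σ ε1 ε2 t ≤ ‖aSTFT x g σ t η‖ := by
      have h2 := hVS η
      have h3 : ‖S η‖ - ‖aSTFT x g σ t η‖ ≤ ‖aSTFT x g σ t η - S η‖ := by
        rw [norm_sub_rev]
        exact norm_sub_norm_le _ _
      linarith
    have hμk : muMin K A t ≤ A k t := Finset.inf'_le _ hmem
    have hAkτ : 0 < A k t * τ0 := mul_pos (hApos k hk t) hτ0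
    constructor
    · show epst < ‖aSTFT x g σ t η‖
      have hM : muMin K A t - Msum K A t * (τ0 + lam0 g σ ε1 ε2 t)
          < A k t - (Msum K A t - A k t) * τ0 - Msum K A t * lam0 g σ ε1 ε2 t := by
        nlinarith
      calc epst ≤ muMin K A t - Msum K A t * (τ0 + lam0 g σ ε1 ε2 t) := heps2
      _ < A k t - (Msum K A t - A k t) * τ0 - Msum K A t * lam0 g σ ε1 ε2 t := hM
      _ ≤ ‖S η‖ - Msum K A t * lam0 g σ ε1 ε2 t := by linarith
      _ ≤ ‖aSTFT x g σ t η‖ := hVlow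
    · show |η - deriv (φ k) t| < α / σ t
      rw [hη, sub_self, abs_zero]
      positivity
  -- Part 1
  have part1 : Gt x g σ t epst = ⋃ k ∈ Finset.range (K + 1), Gtk x g σ φ α t epst k := by
    ext η
    simp only [Set.mem_iUnion, Finset.mem_range, Nat.lt_succ_iff, Gtk, Set.mem_setOf_eq]
    constructor
    · intro hη
      by_contra hcon
      push_neg at hcon
      have hfar : ∀ k, k ≤ K → α / σ t ≤ |η - deriv (φ k) t| := by
        intro k hk
        by_contra h
        push_neg at h
        exact absurd (hcon k hk hη) (not_le.mpr h)
      have h1 : ‖aSTFT x g σ t η‖ ≤ Msum K A t * τ0 + Msum K A t * lam0 g σ ε1 ε2 t := by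
        have h2 := hVS η
        have h3 := hS_tail η hfar
        have h4 : ‖aSTFT x g σ t η‖ ≤ ‖S η‖ + ‖aSTFT x g σ t η - S η‖ := by
          calc ‖aSTFT x g σ t η‖ = ‖S η + (aSTFT x g σ t η - S η)‖ := by rw [add_sub_cancel]
          _ ≤ _ := norm_add_le _ _
        linarith
      have h5 : epst < ‖aSTFT x g σ t η‖ := hη
      have h6 : Msum K A t * (τ0 + lam0 g σ ε1 ε2 t) ≤ epst := heps1
      nlinarith
    · rintro ⟨k, hk, hmem, _⟩
      exact hmem
  refine ⟨part1, ?_, part3⟩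
  -- Part 2
  intro k hk l hl hne
  rw [Set.disjoint_left]
  intro η h1 h2
  have e1 : |η - deriv (φ k) t| < α / σ t := h1.2
  have e2 : |η - deriv (φ l) t| < α / σ t := h2.2
  have h3 := hsep2 k l hk hl hne
  have h4 : |deriv (φ k) t - deriv (φ l) t| < 2 * α / σ t := by
    calc |deriv (φ k) t - deriv (φ l) t|
        ≤ |deriv (φ k) t - η| + |η - deriv (φ l) t| := abs_sub_le _ _ _
    _ = |η - deriv (φ k) t| + |η - deriv (φ l) t| := by rw [abs_sub_comm]
    _ < α / σ t + α / σ t := add_lt_add e1 e2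
    _ = 2 * α / σ t := by ring
  linarith
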